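/- Let k be a field and R = k[x,y]. Fix integers 0 = a_0 < a_1 < ⋯ < a_r = d (r ≥ 1), set b_i = d − a_i, let I = ⟨x^{a_0}y^{b_0}, …, x^{a_r}y^{b_r}⟩ ⊆ R, and let S = ⟨a_0, …, a_r⟩ and T = ⟨b_0, …, b_r⟩ be the numerical semigroups generated by the exponents. Then there exists an integer L such that for every l ≥ L: (1) if s ∈ S and u ∈ ℕ satisfy s ≤ u and s + u ≥ d·l, then x^s y^u ∈ I^l; and (2) if t ∈ T and v ∈ ℕ satisfy t ≤ v and t + v ≥ d·l, then x^v y^t ∈ I^l. -/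

import Mathlib

open MvPolynomial

lemma exists_rep_stmt5 {n : ℕ} (f : Fin n → ℕ) {t : ℕ}
    (ht : t ∈ AddSubmonoid.closure (Set.range f)) :
    ∃ c : Fin n → ℕ, ∑ i, c i * f i = t := by
  induction ht using AddSubmonoid.closure_induction with
  | mem x hx =>
    obtain ⟨i, rfl⟩ := hx
    exact ⟨Pi.single i 1, by simp [Pi.single_apply, ite_mul, Finset.sum_ite_eq]⟩
  | zero => exact ⟨0, by simp⟩
  | add x y _ _ hx hy =>
    obtain ⟨c1, h1⟩ := hx; obtain ⟨c2, h2⟩ := hy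
    exact ⟨c1 + c2, by simp [add_mul, Finset.sum_add_distrib, h1, h2]⟩

lemma normalize_stmt5 {n d : ℕ} (hd : 0 < d) (f : Fin n → ℕ) (w : Fin n) (hw : f w = d) :
    ∀ (m : ℕ) (c : Fin n → ℕ), (∑ i ∈ Finset.univ.erase w, c i) ≤ m →
    ∃ c' : Fin n → ℕ, ∑ i, c' i * f i = ∑ i, c i * f i ∧ ∀ i, i ≠ w → c' i < d := by
  intro m
  induction m with
  | zero =>
    intro c hc
    refine ⟨c, rfl, fun i hi => ?_⟩
    have : c i = 0 := by
      have := Finset.single_le_sum (f := c) (fun j _ => Nat.zero_le _)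
        (Finset.mem_erase.2 ⟨hi, Finset.mem_univ i⟩)
      omega
    omega
  | succ m ih =>
    intro c hc
    by_cases h : ∀ i, i ≠ w → c i < d
    · exact ⟨c, rfl, h⟩
    · push_neg at h
      obtain ⟨i, hiw, hid⟩ := h
      set c' : Fin n → ℕ :=
        Function.update (Function.update c i (c i - d)) w (c w + f i) with hc'
      have hiw' : i ∈ Finset.univ.erase w := Finset.mem_erase.2 ⟨hiw, Finset.mem_univ i⟩
      have hval_w : c' w = c w + f i := Function.update_self _ _ _
      have hval_i : c' i = c i - d := by
        rw [hc', Function.update_of_ne hiw, Function.update_self]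
      have hval : ∀ j, j ≠ w → j ≠ i → c' j = c j := by
        intro j hjw hji
        rw [hc', Function.update_of_ne hjw, Function.update_of_ne hji]
      have hsum1 : ∑ j ∈ Finset.univ.erase w, c' j ≤ m := by
        have e1 : ∑ j ∈ Finset.univ.erase w, c' j
            = c' i + ∑ j ∈ (Finset.univ.erase w).erase i, c' j :=
          (Finset.add_sum_erase _ _ hiw').symm
        have e2 : ∑ j ∈ Finset.univ.erase w, c j
            = c i + ∑ j ∈ (Finset.univ.erase w).erase i, c j :=
          (Finset.add_sum_erase _ _ hiw').symm
        have e3 : ∑ j ∈ (Finset.univ.erase w).erase i, c' j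
            = ∑ j ∈ (Finset.univ.erase w).erase i, c j := by
          refine Finset.sum_congr rfl fun j hj => ?_
          simp only [Finset.mem_erase] at hj
          exact hval j hj.2.1 hj.1
        omega
      have hsum2 : ∑ j, c' j * f j = ∑ j, c j * f j := by
        have e1 : ∀ (g : Fin n → ℕ), ∑ j, g j * f j
            = g w * f w + (g i * f i + ∑ j ∈ (Finset.univ.erase w).erase i, g j * f j) := by
          intro g
          rw [← Finset.add_sum_erase _ (fun j => g j * f j) (Finset.mem_univ w),
            ← Finset.add_sum_erase _ (fun j => g j * f j) hiw']
        rw [e1 c', e1 c, hval_w, hval_i]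
        have e3 : ∑ j ∈ (Finset.univ.erase w).erase i, c' j * f j
            = ∑ j ∈ (Finset.univ.erase w).erase i, c j * f j := by
          refine Finset.sum_congr rfl fun j hj => ?_
          simp only [Finset.mem_erase] at hj
          rw [hval j hj.2.1 hj.1]
        rw [e3, hw]
        have : (c i - d) * f i + d * f i = c i * f i := by
          rw [← add_mul]; congr 1; omega
        nlinarith [this]
      obtain ⟨c'', h1, h2⟩ := ih c' hsum1
      exact ⟨c'', by rw [h1, hsum2], h2⟩

lemma prodMem_stmt5 {K : Type*} [Field K] {n : ℕ} (a b : Fin n → ℕ)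
    (I : Ideal (MvPolynomial (Fin 2) K))
    (hI : I = Ideal.span (Set.range fun i => X 0 ^ a i * X 1 ^ b i))
    (c : Fin n → ℕ) {l s u : ℕ} (hc : ∑ i, c i = l)
    (hA : ∑ i, c i * a i ≤ s) (hB : ∑ i, c i * b i ≤ u) :
    (X 0 : MvPolynomial (Fin 2) K) ^ s * X 1 ^ u ∈ I ^ l := by
  set A := ∑ i, c i * a i with hAdef
  set B := ∑ i, c i * b i with hBdef
  have hmem : ∀ i, (X 0 ^ a i * X 1 ^ b i : MvPolynomial (Fin 2) K) ∈ I := by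
    intro i; rw [hI]; exact Ideal.subset_span ⟨i, rfl⟩
  have hprod : (∏ i, (X 0 ^ a i * X 1 ^ b i : MvPolynomial (Fin 2) K) ^ c i) ∈ I ^ l := by
    rw [← hc, ← Finset.prod_pow_eq_pow_sum]
    exact Ideal.prod_mem_prod fun i _ => Ideal.pow_mem_pow (hmem i) _
  have hprodeq : (∏ i, (X 0 ^ a i * X 1 ^ b i : MvPolynomial (Fin 2) K) ^ c i)
      = X 0 ^ A * X 1 ^ B := by
    simp only [mul_pow, ← pow_mul, Finset.prod_mul_distrib,
      Finset.prod_pow_eq_pow_sum]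
    congr 1 <;> [skip; skip] <;> congr 1 <;>
      exact Finset.sum_congr rfl fun i _ => by ring
  have heq : (X 0 : MvPolynomial (Fin 2) K) ^ s * X 1 ^ u
      = (X 0 ^ (s - A) * X 1 ^ (u - B)) * (X 0 ^ A * X 1 ^ B) := by
    rw [mul_mul_mul_comm, ← pow_add, ← pow_add, Nat.sub_add_cancel hA, Nat.sub_add_cancel hB]
  rw [heq, ← hprodeq]
  exact Ideal.mul_mem_left _ _ hprod

lemma choose_stmt5 {n d : ℕ} (hd : 0 < d) (f : Fin n → ℕ)
    (z w : Fin n) (hz : f z = 0) (hw : f w = d) {l t v : ℕ}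
    (hl : 2 * (n * d) + 2 ≤ l) (ht : t ∈ AddSubmonoid.closure (Set.range f))
    (htv : t ≤ v) (hsum : d * l ≤ t + v) :
    ∃ c : Fin n → ℕ, ∑ i, c i = l ∧ ∑ i, c i * f i ≤ t ∧ d * l ≤ v + ∑ i, c i * f i := by
  set M := n * d with hM
  have hzw : z ≠ w := fun h => by rw [h, hw] at hz; omega
  have hMl : M + 2 ≤ l := by omega
  by_cases hcase : d * l ≤ t + d * M
  · refine ⟨(Pi.single w (l - M) + Pi.single z M : Fin n → ℕ), ?_, ?_, ?_⟩
    · simp [Finset.sum_add_distrib, Finset.sum_pi_single]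
      omega
    all_goals {
      have e : ∑ i, (Pi.single w (l - M) + Pi.single z M : Fin n → ℕ) i * f i = (l - M) * d := by
        simp [add_mul, Finset.sum_add_distrib, Pi.single_apply, ite_mul,
          Finset.sum_ite_eq, hz, hw]
      rw [e]
      have h1 : (l - M) * d + M * d = l * d := by
        rw [← add_mul]; congr 1; omega
      have h2 : M * d ≤ (l - M) * d := Nat.mul_le_mul_right _ (by omega)
      have h3 : d * l = l * d := Nat.mul_comm _ _
      have h4 : d * M = M * d := Nat.mul_comm _ _
      omega
    }
  · obtain ⟨c0, hc0⟩ := exists_rep_stmt5 f ht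
    obtain ⟨c1, hc1, hc1lt⟩ := normalize_stmt5 hd f w hw _ c0 le_rfl
    rw [hc0] at hc1
    set m := ∑ i, c1 i with hm
    have hbound : d * m ≤ t + d * M := by
      have e1 : m = c1 w + ∑ i ∈ Finset.univ.erase w, c1 i :=
        (Finset.add_sum_erase _ _ (Finset.mem_univ w)).symm
      have e2 : ∑ i ∈ Finset.univ.erase w, c1 i ≤ M := by
        calc ∑ i ∈ Finset.univ.erase w, c1 i ≤ ∑ _i ∈ Finset.univ.erase w, d :=
            Finset.sum_le_sum fun i hi => le_of_lt (hc1lt i (Finset.mem_erase.1 hi).1)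
          _ = (Finset.univ.erase w).card * d := by rw [Finset.sum_const, smul_eq_mul]
          _ ≤ n * d := Nat.mul_le_mul_right _ (le_trans (Finset.card_erase_le)
              (by simp))
      have e3 : c1 w * d ≤ t := by
        rw [← hw, ← hc1]
        exact Finset.single_le_sum (f := fun i => c1 i * f i)
          (fun i _ => Nat.zero_le _) (Finset.mem_univ w)
      have : d * m = c1 w * d + d * ∑ i ∈ Finset.univ.erase w, c1 i := by
        rw [e1]; ring
      nlinarith
    have hml : m ≤ l := by nlinarith
    refine ⟨(c1 + Pi.single z (l - m) : Fin n → ℕ), ?_, ?_, ?_⟩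
    · simp [Finset.sum_add_distrib, Finset.sum_pi_single, ← hm]; omega
    · have e : ∑ i, (c1 + Pi.single z (l - m) : Fin n → ℕ) i * f i = t := by
        simp [add_mul, Finset.sum_add_distrib, hc1, Pi.single_apply, ite_mul,
          Finset.sum_ite_eq, hz]
      omega
    · have e : ∑ i, (c1 + Pi.single z (l - m) : Fin n → ℕ) i * f i = t := by
        simp [add_mul, Finset.sum_add_distrib, hc1, Pi.single_apply, ite_mul,
          Finset.sum_ite_eq, hz]
      omega

/-- with `I = ⟨x^{a_i} y^{b_i}⟩ ⊆ k[x,y]` where `0 = a_0 < ⋯ < a_r = d`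
and `b_i = d − a_i`, and `S = ⟨a_i⟩`, `T = ⟨b_i⟩`, there exists `L` such that for all
`l ≥ L`: (1) if `s ∈ S`, `s ≤ u` and `s + u ≥ d·l` then `x^s y^u ∈ I^l`; and
(2) if `t ∈ T`, `t ≤ v` and `t + v ≥ d·l` then `x^v y^t ∈ I^l`. -/
theorem stmt5 {K : Type*} [Field K] {r : ℕ} (hr : 1 ≤ r) (d : ℕ)
    (a b : Fin (r + 1) → ℕ) (ha0 : a 0 = 0) (hmono : StrictMono a)
    (har : a (Fin.last r) = d) (hb : ∀ i, b i = d - a i)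
    (I : Ideal (MvPolynomial (Fin 2) K))
    (hI : I = Ideal.span (Set.range fun i => X 0 ^ a i * X 1 ^ b i)) :
    ∃ L : ℕ, ∀ l : ℕ, L ≤ l →
      (∀ s u : ℕ, s ∈ AddSubmonoid.closure (Set.range a) → s ≤ u → d * l ≤ s + u →
        X 0 ^ s * X 1 ^ u ∈ I ^ l) ∧
      (∀ t v : ℕ, t ∈ AddSubmonoid.closure (Set.range b) → t ≤ v → d * l ≤ t + v →
        X 0 ^ v * X 1 ^ t ∈ I ^ l) := by
  have h0last : (0 : Fin (r + 1)) < Fin.last r := by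
    rw [Fin.lt_def]; simpa using (show 0 < r from hr)
  have hd : 0 < d := by
    have := hmono h0last
    rw [ha0, har] at this
    exact this
  have hfa : ∀ i, a i ≤ d := fun i => har ▸ hmono.monotone (Fin.le_last i)
  have hab : ∀ i, a i + b i = d := fun i => by have := hfa i; rw [hb i]; omega
  have hb0 : b 0 = d := by rw [hb, ha0]; omega
  have hblast : b (Fin.last r) = 0 := by rw [hb, har]; omega
  have hfb : ∀ i, b i ≤ d := fun i => by rw [hb i]; omega
  refine ⟨2 * ((r + 1) * d) + 2, fun l hl => ⟨?_, ?_⟩⟩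
  · intro s u hs hsu hdsum
    obtain ⟨c, hcl, hA, hA2⟩ := choose_stmt5 hd a 0 (Fin.last r) ha0 har hl hs hsu hdsum
    have key : (∑ i, c i * a i) + (∑ i, c i * b i) = d * l := by
      rw [← Finset.sum_add_distrib]
      calc ∑ i, (c i * a i + c i * b i) = ∑ i, c i * d :=
          Finset.sum_congr rfl fun i _ => by rw [← Nat.mul_add, hab i]
        _ = d * l := by rw [← Finset.sum_mul, hcl, Nat.mul_comm]
    exact prodMem_stmt5 a b I hI c hcl hA (by omega)
  · intro t v ht htv hdsum
    obtain ⟨c, hcl, hB, hB2⟩ := choose_stmt5 hd b (Fin.last r) 0 hblast hb0 hl ht htv hdsum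
    have key : (∑ i, c i * a i) + (∑ i, c i * b i) = d * l := by
      rw [← Finset.sum_add_distrib]
      calc ∑ i, (c i * a i + c i * b i) = ∑ i, c i * d :=
          Finset.sum_congr rfl fun i _ => by rw [← Nat.mul_add, hab i]
        _ = d * l := by rw [← Finset.sum_mul, hcl, Nat.mul_comm]
    exact prodMem_stmt5 a b I hI c hcl (by omega) hB
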